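/- Let r₁, r₂ be complex numbers with Re(r₁) ≥ Re(r₂) and Re(r₁) ≥ -1, and let f₁ : ℝ → ℂ satisfy |f₁(u)| ≤ A e^{-4u} for all u ≥ 1 with A ≥ 0. Define A₁(t) = ∫_1^t e^{(r₁-r₂)s} (∫_s^∞ e^{-r₁ u} f₁(u) du) ds. Then for all t ≥ 1, |e^{r₂ t} A₁(t)| ≤ (A/(9e³)) e^{t Re(r₁)}. -/

import Mathlib

open MeasureTheory

lemma aux_integral_exp_neg (s : ℝ) {c : ℝ} (hc : 0 < c) :
    (∫ x in Set.Ioi s, Real.exp (-c * x)) = Real.exp (-c * s) / c := by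
  have h := integral_comp_mul_left_Ioi (fun x => Real.exp (-x)) s hc
  simp only [← neg_mul, smul_eq_mul] at h
  rw [h, integral_exp_neg_Ioi]
  ring

theorem stmt_6 (r₁ r₂ : ℂ) (h12 : r₁.re ≥ r₂.re) (h1 : r₁.re ≥ -1)
    (f₁ : ℝ → ℂ) (hf : Continuous f₁) (A : ℝ) (hA : A ≥ 0)
    (hbd : ∀ u ≥ (1:ℝ), ‖f₁ u‖ ≤ A * Real.exp (-4*u))
    (A₁ : ℝ → ℂ)
    (hA₁ : ∀ t, A₁ t = ∫ s in (1:ℝ)..t,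
        Complex.exp ((r₁ - r₂) * s) * ∫ u in Set.Ici s, Complex.exp (-r₁ * u) * f₁ u) :
    ∀ t ≥ (1:ℝ),
      ‖Complex.exp (r₂ * t) * A₁ t‖ ≤ A / (9 * Real.exp 3) * Real.exp (t * r₁.re) := by
  intro t ht
  set c : ℝ := r₁.re + 4 with hcdef
  have hc3 : (3:ℝ) ≤ c := by simp only [hcdef]; linarith
  have hc0 : (0:ℝ) < c := by linarith
  -- bound on the inner integral
  have inner_bd : ∀ s ≥ (1:ℝ),
      ‖∫ u in Set.Ici s, Complex.exp (-r₁ * u) * f₁ u‖ ≤ A / 3 * Real.exp (-c * s) := by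
    intro s hs
    have hgint : Integrable (fun u : ℝ => A * Real.exp (-c * u))
        (volume.restrict (Set.Ici s)) := by
      have : IntegrableOn (fun u : ℝ => A * Real.exp (-c * u)) (Set.Ici s) :=
        (integrableOn_Ici_iff_integrableOn_Ioi).mpr
          ((exp_neg_integrableOn_Ioi s hc0).const_mul A)
      exact this
    have hbnd : ∀ᵐ (u : ℝ) ∂(volume.restrict (Set.Ici s)),
        ‖Complex.exp (-r₁ * u) * f₁ u‖ ≤ A * Real.exp (-c * u) := by
      refine (ae_restrict_iff' measurableSet_Ici).mpr (Filter.Eventually.of_forall ?_)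
      intro u hu
      have hu1 : (1:ℝ) ≤ u := le_trans hs hu
      have h1' : ‖Complex.exp (-r₁ * u)‖ = Real.exp (-r₁.re * u) := by
        rw [Complex.norm_exp]
        norm_num [Complex.mul_re]
      calc ‖Complex.exp (-r₁ * u) * f₁ u‖
          = Real.exp (-r₁.re * u) * ‖f₁ u‖ := by rw [norm_mul, h1']
        _ ≤ Real.exp (-r₁.re * u) * (A * Real.exp (-4 * u)) := by
            exact mul_le_mul_of_nonneg_left (hbd u hu1) (Real.exp_nonneg _)
        _ = A * Real.exp (-c * u) := by
            rw [show -c * u = -r₁.re * u + -4 * u by rw [hcdef]; ring, Real.exp_add]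
            ring
    calc ‖∫ u in Set.Ici s, Complex.exp (-r₁ * u) * f₁ u‖
        ≤ ∫ u in Set.Ici s, A * Real.exp (-c * u) :=
          norm_integral_le_of_norm_le hgint hbnd
      _ = A * (Real.exp (-c * s) / c) := by
          rw [MeasureTheory.integral_const_mul, MeasureTheory.integral_Ici_eq_integral_Ioi,
            aux_integral_exp_neg s hc0]
      _ ≤ A / 3 * Real.exp (-c * s) := by
          rw [div_eq_mul_inv, ← mul_assoc, div_eq_mul_inv]
          have : A * Real.exp (-c * s) * c⁻¹ ≤ A * Real.exp (-c * s) * 3⁻¹ := by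
            apply mul_le_mul_of_nonneg_left _ (by positivity)
            exact inv_anti₀ (by norm_num) hc3
          linarith [this]
  -- the outer bound
  set Δ : ℝ := r₁.re - r₂.re with hΔ
  have hΔ0 : 0 ≤ Δ := by simp [hΔ]; linarith
  set G : ℝ → ℝ := fun s => A / 3 * Real.exp (Δ * t) * Real.exp (-c * s) with hG
  have hGint : IntervalIntegrable G volume 1 t := by
    exact (Continuous.intervalIntegrable (by continuity) 1 t)
  have houter : ∀ᵐ (s : ℝ) ∂(volume.restrict (Set.uIoc (1:ℝ) t)),
      ‖Complex.exp ((r₁ - r₂) * s) * ∫ u in Set.Ici s, Complex.exp (-r₁ * u) * f₁ u‖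
        ≤ G s := by
    refine (ae_restrict_iff' measurableSet_uIoc).mpr (Filter.Eventually.of_forall ?_)
    intro s hsmem
    rw [Set.uIoc_of_le ht] at hsmem
    obtain ⟨hs1, hst⟩ := hsmem
    have hs1' : (1:ℝ) ≤ s := le_of_lt hs1
    have hexp : ‖Complex.exp ((r₁ - r₂) * s)‖ = Real.exp (Δ * s) := by
      rw [Complex.norm_exp]
      norm_num [Complex.mul_re, hΔ]
    calc ‖Complex.exp ((r₁ - r₂) * s) * ∫ u in Set.Ici s, Complex.exp (-r₁ * u) * f₁ u‖
        = Real.exp (Δ * s) * ‖∫ u in Set.Ici s, Complex.exp (-r₁ * u) * f₁ u‖ := by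
          rw [norm_mul, hexp]
      _ ≤ Real.exp (Δ * s) * (A / 3 * Real.exp (-c * s)) :=
          mul_le_mul_of_nonneg_left (inner_bd s hs1') (Real.exp_nonneg _)
      _ ≤ Real.exp (Δ * t) * (A / 3 * Real.exp (-c * s)) := by
          apply mul_le_mul_of_nonneg_right _ (by positivity)
          exact Real.exp_le_exp.mpr (mul_le_mul_of_nonneg_left hst hΔ0)
      _ = G s := by rw [hG]; ring
  have hGval : (∫ s in (1:ℝ)..t, G s) ≤ A / 3 * Real.exp (Δ * t) * (Real.exp (-c) / c) := by
    have : (∫ s in (1:ℝ)..t, G s)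
        = A / 3 * Real.exp (Δ * t) * ∫ s in (1:ℝ)..t, Real.exp (-c * s) := by
      rw [hG, intervalIntegral.integral_const_mul]
    rw [this]
    apply mul_le_mul_of_nonneg_left _ (by positivity)
    have hint : (∫ s in (1:ℝ)..t, Real.exp (-c * s))
        = Real.exp (-c * 1) / c - Real.exp (-c * t) / c := by
      have : ∀ x ∈ Set.uIcc (1:ℝ) t, HasDerivAt (fun y => -Real.exp (-c * y) / c)
          (Real.exp (-c * x)) x := by
        intro x _
        have h := ((Real.hasDerivAt_exp (-c * x)).comp x
          ((hasDerivAt_id x).const_mul (-c)))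
        have h2 : HasDerivAt (fun y => -Real.exp (-c * y) / c)
            (-(Real.exp (-c * x) * (-c * 1)) / c) x := h.neg.div_const c
        convert h2 using 1
        field_simp
      rw [intervalIntegral.integral_eq_sub_of_hasDerivAt this
        (Continuous.intervalIntegrable (by continuity) 1 t)]
      ring
    rw [hint]
    have : Real.exp (-c * t) / c ≥ 0 := by positivity
    have h2 : Real.exp (-c * 1) / c = Real.exp (-c) / c := by norm_num
    linarith
  have hGnn : (0:ℝ) ≤ ∫ s in (1:ℝ)..t, G s := by
    apply intervalIntegral.integral_nonneg ht
    intro s _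
    positivity
  have hnorm : ‖A₁ t‖ ≤ A / 3 * Real.exp (Δ * t) * (Real.exp (-c) / c) := by
    rw [hA₁ t]
    calc ‖∫ s in (1:ℝ)..t,
          Complex.exp ((r₁ - r₂) * s) * ∫ u in Set.Ici s, Complex.exp (-r₁ * u) * f₁ u‖
        ≤ |∫ s in (1:ℝ)..t, G s| := intervalIntegral.norm_integral_le_abs_of_norm_le houter hGint
      _ = ∫ s in (1:ℝ)..t, G s := abs_of_nonneg hGnn
      _ ≤ _ := hGval
  have hexp2 : ‖Complex.exp (r₂ * t)‖ = Real.exp (r₂.re * t) := by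
    rw [Complex.norm_exp]
    norm_num [Complex.mul_re]
  calc ‖Complex.exp (r₂ * t) * A₁ t‖ = Real.exp (r₂.re * t) * ‖A₁ t‖ := by
        rw [norm_mul, hexp2]
    _ ≤ Real.exp (r₂.re * t) * (A / 3 * Real.exp (Δ * t) * (Real.exp (-c) / c)) :=
        mul_le_mul_of_nonneg_left hnorm (Real.exp_nonneg _)
    _ = Real.exp (r₂.re * t) * Real.exp (Δ * t) * (A / 3 * (Real.exp (-c) / c)) := by ring
    _ = Real.exp (t * r₁.re) * (A / 3 * (Real.exp (-c) / c)) := by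
        rw [← Real.exp_add]
        congr 1
        rw [hΔ]; ring
    _ = A / 3 * (Real.exp (-c) / c) * Real.exp (t * r₁.re) := by ring
    _ ≤ A / (9 * Real.exp 3) * Real.exp (t * r₁.re) := by
        apply mul_le_mul_of_nonneg_right _ (Real.exp_nonneg _)
        have h1 : Real.exp (-c) ≤ Real.exp (-3) := Real.exp_le_exp.mpr (by linarith)
        have h2 : Real.exp (-c) / c ≤ Real.exp (-3) / 3 := by
          apply div_le_div₀ (Real.exp_nonneg _) h1 (by norm_num) hc3
        have h3 : A / 3 * (Real.exp (-c) / c) ≤ A / 3 * (Real.exp (-3) / 3) :=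
          mul_le_mul_of_nonneg_left h2 (by positivity)
        have he : Real.exp 3 ≠ 0 := (Real.exp_pos 3).ne'
        have h4 : A / 3 * (Real.exp (-3) / 3) = A / (9 * Real.exp 3) := by
          rw [Real.exp_neg, div_mul_div_comm, div_eq_div_iff (by norm_num) (by positivity)]
          have hh : Real.exp 3 * (Real.exp 3)⁻¹ = 1 := mul_inv_cancel₀ (Real.exp_pos 3).ne'
          calc A * (Real.exp 3)⁻¹ * (9 * Real.exp 3)
              = A * 9 * (Real.exp 3 * (Real.exp 3)⁻¹) := by ring
            _ = A * (3 * 3) := by rw [hh]; ring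
        linarith
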